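/- Let X be a simplicial complex of dimension n and 1 ≤ k ≤ n-1. Suppose (i) every two (k-1)-simplices of X are connected by a k-gallery, and (ii) for every (k-1)-simplex τ, the link X_τ is path connected. Then every two k-simplices of X are connected by a (k+1)-gallery; i.e., X is (k+1)-gallery connected. -/

import Mathlib

variable {V : Type*} [DecidableEq V]

/-- The set of `j`-dimensional simplices of a simplicial complex `K`. -/
def faces (K : Finset (Finset V)) (j : ℕ) : Finset (Finset V) :=
  K.filter fun σ => σ.card = j + 1

/-- `K` is closed under passing to (nonempty) faces. -/
def IsDownClosed (K : Finset (Finset V)) : Prop :=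
  ∀ σ ∈ K, ∀ τ : Finset V, τ ⊆ σ → τ.Nonempty → τ ∈ K

/-- `η₀` and `η₁` (`j`-simplices, of cardinality `j+1`) are connected by a `(j+1)`-gallery with
simplices in `F`: consecutive simplices of the gallery share a `j`-face. -/
def GalleryConnects (j : ℕ) (F : Finset (Finset V)) (η₀ η₁ : Finset V) : Prop :=
  η₀ = η₁ ∨ ∃ (L : List (Finset V)) (h : L ≠ []),
    (∀ σ ∈ L, σ ∈ F) ∧ L.Chain' (fun a b => (a ∩ b).card = j + 1) ∧
    η₀ ⊆ L.head h ∧ η₁ ⊆ L.getLast h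

/-- `a` and `b` are adjacent vertices of the link `X_τ`. -/
def LinkAdj (K : Finset (Finset V)) (τ : Finset V) (a b : V) : Prop :=
  a ∉ τ ∧ b ∉ τ ∧ a ≠ b ∧ insert a (insert b τ) ∈ K

/-- The link `X_τ` is path connected. -/
def LinkConnected (K : Finset (Finset V)) (τ : Finset V) : Prop :=
  ∀ u v : V, u ∉ τ → insert u τ ∈ K → v ∉ τ → insert v τ ∈ K →
    Relation.ReflTransGen (LinkAdj K τ) u v

set_option linter.unusedVariables false

def BigAdj (K : Finset (Finset V)) (k : ℕ) (σ σ' : Finset V) : Prop :=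
  σ ∈ faces K (k+1) ∧ σ' ∈ faces K (k+1) ∧ (σ ∩ σ').card = k + 1

def ConnW (K : Finset (Finset V)) (k : ℕ) (σ σ' : Finset V) : Prop :=
  ∃ b b', b ∈ faces K (k+1) ∧ b' ∈ faces K (k+1) ∧ σ ⊆ b ∧ σ' ⊆ b' ∧
    Relation.ReflTransGen (BigAdj K k) b b'

lemma mem_faces {K : Finset (Finset V)} {j : ℕ} {σ : Finset V} :
    σ ∈ faces K j ↔ σ ∈ K ∧ σ.card = j + 1 := Finset.mem_filter

lemma adj_or_eq {K : Finset (Finset V)} {k : ℕ} {b b' : Finset V}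
    (hb : b ∈ faces K (k+1)) (hb' : b' ∈ faces K (k+1)) {c : Finset V}
    (h1 : c ⊆ b) (h2 : c ⊆ b') (hc : c.card = k+1) :
    Relation.ReflTransGen (BigAdj K k) b b' := by
  by_cases h : b = b'
  · subst h; exact .refl
  · refine .single ⟨hb, hb', ?_⟩
    have hcb := (mem_faces.mp hb).2
    have hcb' := (mem_faces.mp hb').2
    have h3 : k + 1 ≤ (b ∩ b').card := by
      calc k + 1 = c.card := hc.symm
        _ ≤ (b ∩ b').card := Finset.card_le_card (Finset.subset_inter h1 h2)
    have h4 : (b ∩ b').card ≤ k + 2 := by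
      calc (b ∩ b').card ≤ b.card := Finset.card_le_card Finset.inter_subset_left
        _ = k + 2 := hcb
    have h5 : (b ∩ b').card ≠ k + 2 := by
      intro he
      have : b ∩ b' = b := Finset.eq_of_subset_of_card_le Finset.inter_subset_left (by omega)
      have hbb : b ⊆ b' := by rw [← this]; exact Finset.inter_subset_right
      exact h (Finset.eq_of_subset_of_card_le hbb (by omega))
    omega

lemma rtg_list {α : Type*} {R : α → α → Prop} {a b : α} (h : Relation.ReflTransGen R a b) :
    ∃ (L : List α) (hL : L ≠ []), L.Chain' R ∧ L.head hL = a ∧ L.getLast hL = b ∧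
      ∀ x ∈ L, x = a ∨ ∃ y, R y x := by
  induction h with
  | refl => exact ⟨[a], by simp, List.isChain_singleton a, rfl, rfl, by simp⟩
  | @tail m c h₁ h₂ ih =>
    obtain ⟨L, hL, hc, hh, hl, hmem⟩ := ih
    refine ⟨L ++ [c], by simp, ?_, ?_, ?_, ?_⟩
    · simp only [List.Chain', List.isChain_append]
      refine ⟨hc, List.isChain_singleton c, ?_⟩
      intro x hx y hy
      rw [List.getLast?_eq_getLast hL] at hx
      simp at hx hy
      rw [← hx, ← hy, hl]; exact h₂
    · rw [List.head_append_of_ne_nil hL]; exact hh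
    · simp [List.getLast_append]
    · intro x hx
      rcases List.mem_append.mp hx with h | h
      · exact hmem x h
      · simp at h; exact Or.inr ⟨m, h ▸ (hl ▸ h₂)⟩

lemma connw_gallery {K : Finset (Finset V)} {k : ℕ} {η₀ η₁ : Finset V}
    (h : ConnW K k η₀ η₁) :
    η₀ = η₁ ∨ ∃ (L : List (Finset V)) (hL : L ≠ []),
      (∀ σ ∈ L, σ ∈ faces K (k+1)) ∧ L.Chain' (fun a b => (a ∩ b).card = k + 1) ∧
      η₀ ⊆ L.head hL ∧ η₁ ⊆ L.getLast hL := by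
  obtain ⟨b, b', hb, hb', hs, hs', hr⟩ := h
  right
  obtain ⟨L, hL, hc, hh, hl, hmem⟩ := rtg_list hr
  refine ⟨L, hL, ?_, ?_, ?_, ?_⟩
  · intro σ hσ
    rcases hmem σ hσ with e | ⟨y, hy⟩
    · exact e ▸ hb
    · exact hy.2.1
  · exact List.IsChain.imp (fun a b h => h.2.2) hc
  · exact hh ▸ hs
  · exact hl ▸ hs'

lemma ltb_aux {K : Finset (Finset V)} {k : ℕ} {τ : Finset V} (hτc : τ.card = k) {v : V} :
    ∀ {u : V}, Relation.ReflTransGen (LinkAdj K τ) u v → u ≠ v →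
      ConnW K k (insert u τ) (insert v τ) := by
  intro u h
  induction h using Relation.ReflTransGen.head_induction_on with
  | refl => intro h; exact absurd rfl h
  | @head a c hac' hcv' ih =>
    intro _
    obtain ⟨ha, hc, hac, hK⟩ := hac'
    have hb₀c : (insert a (insert c τ)).card = k + 2 := by
      rw [Finset.card_insert_of_notMem (by simp [ha, hac]),
        Finset.card_insert_of_notMem hc, hτc]
    have hb₀ : insert a (insert c τ) ∈ faces K (k+1) := mem_faces.mpr ⟨hK, hb₀c⟩
    have hsub_a : insert a τ ⊆ insert a (insert c τ) := by
      intro x hx; simp at hx ⊢; tauto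
    have hsub_c : insert c τ ⊆ insert a (insert c τ) := by
      intro x hx; simp at hx ⊢; tauto
    by_cases hcv : c = v
    · subst hcv
      exact ⟨_, _, hb₀, hb₀, hsub_a, hsub_c, .refl⟩
    · obtain ⟨b₁, b', h1, h2, h3, h4, h5⟩ := ih hcv
      have hcard : (insert c τ).card = k + 1 := by
        rw [Finset.card_insert_of_notMem hc, hτc]
      exact ⟨_, b', hb₀, h2, hsub_a, h4,
        (adj_or_eq hb₀ h1 hsub_c h3 hcard).trans h5⟩

lemma link_to_big {K : Finset (Finset V)} {k : ℕ} {τ : Finset V} (hτc : τ.card = k)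
    (hlt : LinkConnected K τ) {u v : V} (hu : u ∉ τ) (huK : insert u τ ∈ K)
    (hv : v ∉ τ) (hvK : insert v τ ∈ K) (huv : u ≠ v) :
    ConnW K k (insert u τ) (insert v τ) :=
  ltb_aux hτc (hlt u v hu huK hv hvK) huv

lemma bridge {K : Finset (Finset V)} {k : ℕ} {τ σ σ' : Finset V} (hτc : τ.card = k)
    (hlt : LinkConnected K τ) (hσ : σ ∈ K) (hσ' : σ' ∈ K)
    (hσc : σ.card = k+1) (hσ'c : σ'.card = k+1)
    (hts : τ ⊆ σ) (hts' : τ ⊆ σ') (hne : σ ≠ σ') : ConnW K k σ σ' := by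
  have h1 : (σ \ τ).card = 1 := by rw [Finset.card_sdiff_of_subset hts, hσc, hτc]; omega
  have h2 : (σ' \ τ).card = 1 := by rw [Finset.card_sdiff_of_subset hts', hσ'c, hτc]; omega
  obtain ⟨u, hu⟩ := Finset.card_eq_one.mp h1
  obtain ⟨v, hv⟩ := Finset.card_eq_one.mp h2
  have huσ : u ∈ σ ∧ u ∉ τ := by
    have : u ∈ σ \ τ := hu ▸ Finset.mem_singleton_self u
    exact ⟨(Finset.mem_sdiff.mp this).1, (Finset.mem_sdiff.mp this).2⟩
  have hvσ : v ∈ σ' ∧ v ∉ τ := by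
    have : v ∈ σ' \ τ := hv ▸ Finset.mem_singleton_self v
    exact ⟨(Finset.mem_sdiff.mp this).1, (Finset.mem_sdiff.mp this).2⟩
  have heσ : insert u τ = σ := by
    apply Finset.eq_of_subset_of_card_le (Finset.insert_subset huσ.1 hts)
    rw [Finset.card_insert_of_notMem huσ.2, hτc, hσc]
  have heσ' : insert v τ = σ' := by
    apply Finset.eq_of_subset_of_card_le (Finset.insert_subset hvσ.1 hts')
    rw [Finset.card_insert_of_notMem hvσ.2, hτc, hσ'c]
  have huv : u ≠ v := by
    intro h; apply hne; rw [← heσ, ← heσ', h]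
  have := link_to_big hτc hlt huσ.2 (heσ ▸ hσ) hvσ.2 (heσ' ▸ hσ') huv
  rwa [heσ, heσ'] at this

lemma connw_trans {K : Finset (Finset V)} {k : ℕ} {σ m σ' : Finset V}
    (hm : m.card = k+1) (h1 : ConnW K k σ m) (h2 : ConnW K k m σ') : ConnW K k σ σ' := by
  obtain ⟨b1, b1', hb1, hb1', hs1, hs1', hr1⟩ := h1
  obtain ⟨b2, b2', hb2, hb2', hs2, hs2', hr2⟩ := h2
  exact ⟨b1, b2', hb1, hb2', hs1, hs2',
    hr1.trans ((adj_or_eq hb1' hb2 hs1' hs2 hm).trans hr2)⟩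

lemma chain_conn {K : Finset (Finset V)} {k : ℕ}
    (hstep : ∀ a b : Finset V, a ∈ K → a.card = k+1 → b ∈ K → b.card = k+1 →
      (a ∩ b).card = k → ConnW K k a b) :
    ∀ (M : List (Finset V)) (hM : M ≠ []),
    (∀ σ ∈ M, σ ∈ K ∧ σ.card = k+1) →
    M.Chain' (fun a b => (a ∩ b).card = k) →
    M.head hM = M.getLast hM ∨ ConnW K k (M.head hM) (M.getLast hM)
  | [], h => absurd rfl h
  | [a], _ => fun _ _ => Or.inl rfl
  | a :: b :: t, _ => fun hmem hchain => by
    simp only [List.Chain', List.isChain_cons_cons] at hchain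
    have ha := hmem a (by simp)
    have hb := hmem b (by simp)
    have hab : ConnW K k a b := hstep a b ha.1 ha.2 hb.1 hb.2 hchain.1
    have ih := chain_conn hstep (b :: t) (by simp)
      (fun σ hσ => hmem σ (List.mem_cons_of_mem a hσ)) hchain.2
    rw [List.head_cons, List.getLast_cons (by simp : b :: t ≠ [])]
    rcases ih with h | h
    · rw [List.head_cons] at h
      exact Or.inr (h ▸ hab)
    · rw [List.head_cons] at h
      exact Or.inr (connw_trans hb.2 hab h)

/-- If every two `(k-1)`-simplices of `X` are connected by a `k`-gallery and every link of a
`(k-1)`-simplex is path connected, then every two `k`-simplices of `X` are connected by a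
`(k+1)`-gallery, i.e. `X` is `(k+1)`-gallery connected. -/
theorem stmt_11 (K : Finset (Finset V)) (n k : ℕ) (hk : 1 ≤ k) (hkn : k + 1 ≤ n)
    (hdim : ∀ σ ∈ K, σ.card ≤ n + 1) (hdown : IsDownClosed K)
    (hconn : ∀ η₀ ∈ faces K (k - 1), ∀ η₁ ∈ faces K (k - 1),
      GalleryConnects (k - 1) (faces K k) η₀ η₁)
    (hlink : ∀ τ ∈ faces K (k - 1), LinkConnected K τ) :
    ∀ η₀ ∈ faces K k, ∀ η₁ ∈ faces K k, GalleryConnects k (faces K (k + 1)) η₀ η₁ := by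
  -- helper: membership in faces K (k-1)
  have hfk1 : ∀ τ : Finset V, τ ∈ K → τ.card = k → τ ∈ faces K (k-1) := by
    intro τ h1 h2
    exact mem_faces.mpr ⟨h1, by omega⟩
  have hlink' : ∀ τ : Finset V, τ ∈ K → τ.card = k → LinkConnected K τ :=
    fun τ h1 h2 => hlink τ (hfk1 τ h1 h2)
  -- bridging two k-simplices sharing a given (k-1)-face τ
  have hbridge : ∀ τ σ σ' : Finset V, τ ∈ K → τ.card = k → σ ∈ K → σ' ∈ K →
      σ.card = k+1 → σ'.card = k+1 → τ ⊆ σ → τ ⊆ σ' → σ ≠ σ' → ConnW K k σ σ' := by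
    intro τ σ σ' ht1 ht2 h1 h2 h3 h4 h5 h6 h7
    exact bridge ht2 (hlink' τ ht1 ht2) h1 h2 h3 h4 h5 h6 h7
  -- the consecutive-step hypothesis for chain_conn
  have hstep : ∀ a b : Finset V, a ∈ K → a.card = k+1 → b ∈ K → b.card = k+1 →
      (a ∩ b).card = k → ConnW K k a b := by
    intro a b ha hac hb hbc hi
    have hne : a ≠ b := by
      intro h; subst h; simp at hi; omega
    have htK : a ∩ b ∈ K := hdown a ha (a ∩ b) Finset.inter_subset_left
      (Finset.card_pos.mp (by omega))
    exact hbridge (a ∩ b) a b htK hi ha hb hac hbc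
      Finset.inter_subset_left Finset.inter_subset_right hne
  intro η₀ hη₀ η₁ hη₁
  by_cases heq : η₀ = η₁
  · exact Or.inl heq
  obtain ⟨hη₀K, hη₀c⟩ := mem_faces.mp hη₀
  obtain ⟨hη₁K, hη₁c⟩ := mem_faces.mp hη₁
  -- pick u ∈ η₀ \ η₁ and v ∈ η₁ \ η₀
  have hns : ¬ η₀ ⊆ η₁ := fun h => heq (Finset.eq_of_subset_of_card_le h (by omega))
  have hns' : ¬ η₁ ⊆ η₀ := fun h => heq (Finset.eq_of_subset_of_card_le h (by omega)).symm
  obtain ⟨u, hu0, hu1⟩ := Finset.not_subset.mp hns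
  obtain ⟨v, hv1, hv0⟩ := Finset.not_subset.mp hns'
  set τ₀ := η₀.erase u with hτ₀def
  set τ₁ := η₁.erase v with hτ₁def
  have hτ₀c : τ₀.card = k := by
    rw [hτ₀def, Finset.card_erase_of_mem hu0, hη₀c]; omega
  have hτ₁c : τ₁.card = k := by
    rw [hτ₁def, Finset.card_erase_of_mem hv1, hη₁c]; omega
  have hτ₀K : τ₀ ∈ K := hdown η₀ hη₀K τ₀ (Finset.erase_subset u η₀)
    (Finset.card_pos.mp (by omega))
  have hτ₁K : τ₁ ∈ K := hdown η₁ hη₁K τ₁ (Finset.erase_subset v η₁)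
    (Finset.card_pos.mp (by omega))
  have hins₀ : insert u τ₀ = η₀ := Finset.insert_erase hu0
  have hins₁ : insert v τ₁ = η₁ := Finset.insert_erase hv1
  have hτ₀s : τ₀ ⊆ η₀ := Finset.erase_subset u η₀
  have hτ₁s : τ₁ ⊆ η₁ := Finset.erase_subset v η₁
  have key : ConnW K k η₀ η₁ := by
    rcases hconn τ₀ (hfk1 τ₀ hτ₀K hτ₀c) τ₁ (hfk1 τ₁ hτ₁K hτ₁c) with h | ⟨M, hM, hMmem, hMchain, hMh, hMl⟩
    · -- τ₀ = τ₁
      have huτ : u ∉ τ₀ := Finset.notMem_erase u η₀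
      have hvτ : v ∉ τ₀ := h ▸ Finset.notMem_erase v η₁
      have huv : u ≠ v := fun he => hu1 (he ▸ hv1)
      have := link_to_big hτ₀c (hlink' τ₀ hτ₀K hτ₀c) huτ (hins₀ ▸ hη₀K) hvτ
        (by rw [h]; exact hins₁ ▸ hη₁K) huv
      rwa [hins₀, h, hins₁] at this
    · -- gallery M of k-simplices from τ₀ to τ₁
      have hMf : ∀ σ ∈ M, σ ∈ K ∧ σ.card = k + 1 := by
        intro σ hσ
        have := mem_faces.mp (hMmem σ hσ)
        exact this
      have hchainM : M.Chain' (fun a b => (a ∩ b).card = k) := by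
        have : k - 1 + 1 = k := by omega
        exact this ▸ hMchain
      have hhead := hMf (M.head hM) (List.head_mem hM)
      have hlast := hMf (M.getLast hM) (List.getLast_mem hM)
      have c₀ : η₀ = M.head hM ∨ ConnW K k η₀ (M.head hM) := by
        by_cases h : η₀ = M.head hM
        · exact Or.inl h
        · exact Or.inr (hbridge τ₀ η₀ (M.head hM) hτ₀K hτ₀c hη₀K hhead.1 hη₀c hhead.2
            hτ₀s hMh h)
      have cmid := chain_conn hstep M hM hMf hchainM
      have c₂ : M.getLast hM = η₁ ∨ ConnW K k (M.getLast hM) η₁ := by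
        by_cases h : M.getLast hM = η₁
        · exact Or.inl h
        · exact Or.inr (hbridge τ₁ (M.getLast hM) η₁ hτ₁K hτ₁c hlast.1 hη₁K hlast.2 hη₁c
            hMl hτ₁s h)
      -- combine
      have c01 : η₀ = M.getLast hM ∨ ConnW K k η₀ (M.getLast hM) := by
        rcases c₀ with h₀ | h₀ <;> rcases cmid with h₁ | h₁
        · exact Or.inl (h₀.trans h₁)
        · exact Or.inr (h₀ ▸ h₁)
        · exact Or.inr (h₁ ▸ h₀)
        · exact Or.inr (connw_trans hhead.2 h₀ h₁)
      rcases c01 with h₀ | h₀ <;> rcases c₂ with h₁ | h₁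
      · exact absurd (h₀.trans h₁) heq
      · exact h₀ ▸ h₁
      · exact h₁ ▸ h₀
      · exact connw_trans hlast.2 h₀ h₁
  exact connw_gallery key
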